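/- Let S be a complete lattice, C(S) = S ⊗ S^op with the quantale structure (x ⊗ y')·(u ⊗ v') = 0 if u ≤ y else x ⊗ v', Q(S) the endomorphism quantale, and φ : C(S) → Q(S) the map determined by φ(x ⊗ y') = ρ_x∘λ_y. Then φ, together with the Q(S)-bimodule structure on C(S) induced by α·(x ⊗ y') = α(x) ⊗ y' and (x ⊗ y')·α = x ⊗ α*(y)', makes C(S) → Q(S) a strong couple, and d = ⋁_{x ∈ S} (x ⊗ x') is a cyclic dualizing element, so this is a strong Girard couple. -/

import Mathlib

/-- A quantale: a complete lattice with an associative multiplication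
distributing over arbitrary joins in both variables. -/
class Quantale' (α : Type*) extends CompleteLattice α, Mul α where
  mul_assoc : ∀ a b c : α, a * b * c = a * (b * c)
  mul_sSup : ∀ (a : α) (s : Set α), a * sSup s = ⨆ b ∈ s, a * b
  sSup_mul : ∀ (s : Set α) (a : α), sSup s * a = ⨆ b ∈ s, b * a

/-- A couple of quantales: a quantale `Q`, a quantale `C` which is also a
`Q`-bimodule, and a coupling map `φ : C → Q` which is a join-preserving
`Q`-bimodule homomorphism satisfying `φ(c₁)·c₂ = c₁·φ(c₂) = c₁·c₂`. -/
structure Couple (C Q : Type*) [Quantale' C] [Quantale' Q] where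
  φ : C → Q
  /-- the left action of `Q` on `C` -/
  act : Q → C → C
  /-- the right action of `Q` on `C` -/
  actr : C → Q → C
  act_sSup : ∀ (a : Q) (s : Set C), act a (sSup s) = ⨆ c ∈ s, act a c
  sSup_act : ∀ (s : Set Q) (c : C), act (sSup s) c = ⨆ a ∈ s, act a c
  actr_sSup : ∀ (c : C) (s : Set Q), actr c (sSup s) = ⨆ a ∈ s, actr c a
  sSup_actr : ∀ (s : Set C) (a : Q), actr (sSup s) a = ⨆ c ∈ s, actr c a
  act_mul : ∀ (a b : Q) (c : C), act (a * b) c = act a (act b c)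
  actr_mul : ∀ (c : C) (a b : Q), actr c (a * b) = actr (actr c a) b
  act_actr : ∀ (a : Q) (c : C) (b : Q), actr (act a c) b = act a (actr c b)
  φ_sSup : ∀ s : Set C, φ (sSup s) = ⨆ c ∈ s, φ c
  φ_act : ∀ (a : Q) (c : C), φ (act a c) = a * φ c
  φ_actr : ∀ (c : C) (a : Q), φ (actr c a) = φ c * a
  couple_left : ∀ c₁ c₂ : C, act (φ c₁) c₂ = c₁ * c₂
  couple_right : ∀ c₁ c₂ : C, actr c₁ (φ c₂) = c₁ * c₂

/-- A Girard couple: a couple together with a cyclic dualizing element `d ∈ C`. -/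
structure GirardCouple (C Q : Type*) [Quantale' C] [Quantale' Q] extends Couple C Q where
  d : C
  cyclic : ∀ (a : Q) (c : C), act a c ≤ d ↔ actr c a ≤ d
  /-- `d ⧸ (a → d) = a` for `a ∈ Q` -/
  dualizing_Q₁ : ∀ a : Q, sSup {b : Q | act b (sSup {c : C | actr c a ≤ d}) ≤ d} = a
  /-- `(d ⧸ a) → d = a` for `a ∈ Q` -/
  dualizing_Q₂ : ∀ a : Q, sSup {b : Q | actr (sSup {c : C | act a c ≤ d}) b ≤ d} = a
  /-- `d ⧸ (c → d) = c` for `c ∈ C` -/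
  dualizing_C₁ : ∀ c : C, sSup {c' : C | act (sSup {a : Q | actr c a ≤ d}) c' ≤ d} = c
  /-- `(d ⧸ c) → d = c` for `c ∈ C` -/
  dualizing_C₂ : ∀ c : C, sSup {c' : C | actr c' (sSup {a : Q | act a c ≤ d}) ≤ d} = c

section QS
variable {S : Type*} [CompleteLattice S]

/-- Pointwise suprema of join-preserving endomaps. -/
noncomputable instance sSupHom.instSupSetEnd : SupSet (sSupHom S S) :=
  ⟨fun s => ⟨fun x => ⨆ f ∈ s, f x, by
    intro A
    rw [sSup_image]
    simp only [map_sSup, sSup_image]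
    exact iSup₂_comm _⟩⟩

theorem sSupHom.sSup_apply' (s : Set (sSupHom S S)) (x : S) :
    sSup s x = ⨆ f ∈ s, f x := rfl

/-- `Q(S)`: the complete lattice of join-preserving endomaps of `S`. -/
noncomputable instance sSupHom.instCompleteLatticeEnd : CompleteLattice (sSupHom S S) :=
  completeLatticeOfSup _ fun s => by
    constructor
    · intro f hf x
      exact le_biSup (fun g : sSupHom S S => g x) hf
    · intro g hg x
      exact iSup₂_le fun f hf => hg hf x

/-- The endomorphism quantale `Q(S)`, with composition as multiplication. -/
noncomputable instance sSupHom.instQuantaleEnd : Quantale' (sSupHom S S) where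
  __ := sSupHom.instCompleteLatticeEnd
  mul := fun f g => f.comp g
  mul_assoc := fun _ _ _ => rfl
  mul_sSup := by
    intro a s
    apply DFunLike.ext
    intro x
    rw [← sSup_image, sSupHom.sSup_apply', iSup_image]
    show a ((sSup s) x) = _
    rw [sSupHom.sSup_apply' s x, map_iSup₂]
    rfl
  sSup_mul := by
    intro s a
    apply DFunLike.ext
    intro x
    rw [← sSup_image, sSupHom.sSup_apply', iSup_image]
    show (sSup s) (a x) = _
    rw [sSupHom.sSup_apply' s (a x)]
    rfl

open Classical in
/-- The right-sided element `ρ_x` of `Q(S)`. -/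
noncomputable def rho (x : S) : sSupHom S S :=
  ⟨fun y => if y = ⊥ then ⊥ else x, by
    intro A
    rw [sSup_image]
    show (if sSup A = ⊥ then ⊥ else x) = _
    rcases eq_or_ne (sSup A) ⊥ with h | h
    · rw [h, if_pos rfl]

      refine (le_bot_iff.mp (iSup₂_le fun y hy => ?_)).symm
      have hy' : y = ⊥ := le_bot_iff.mp ((le_sSup hy).trans_eq h)
      simp [hy']
    · rw [if_neg h]
      refine le_antisymm ?_ (iSup₂_le fun y hy => ?_)
      · obtain ⟨a, ha, hab⟩ : ∃ a ∈ A, a ≠ ⊥ := by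
          by_contra hc
          push_neg at hc
          exact h (sSup_eq_bot.mpr hc)
        have hx : x = if a = ⊥ then ⊥ else x := by simp [hab]
        exact hx.le.trans (le_biSup (fun y => if y = ⊥ then ⊥ else x) ha)
      · split
        · exact bot_le
        · exact le_rfl⟩

open Classical in
/-- The left-sided element `λ_x` of `Q(S)`. -/
noncomputable def lam (x : S) : sSupHom S S :=
  ⟨fun y => if y ≤ x then ⊥ else ⊤, by
    intro A
    rw [sSup_image]
    show (if sSup A ≤ x then ⊥ else ⊤) = _
    by_cases h : sSup A ≤ x
    · rw [if_pos h]
      refine (le_bot_iff.mp (iSup₂_le fun y hy => ?_)).symm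
      rw [if_pos ((le_sSup hy).trans h)]
    · rw [if_neg h]
      obtain ⟨a, ha, hax⟩ : ∃ a ∈ A, ¬ a ≤ x := by
        by_contra hc
        push_neg at hc
        exact h (sSup_le hc)
      refine le_antisymm ?_ le_top
      have ht : (⊤ : S) = if a ≤ x then ⊥ else ⊤ := by simp [hax]
      exact ht.le.trans (le_biSup (fun y => if y ≤ x then ⊥ else ⊤) ha)⟩

/-- The right adjoint of a join-preserving map. -/
noncomputable def adj (α : sSupHom S S) (x : S) : S := sSup {y | α y ≤ x}

end QS

/-- A bimorphism of complete lattices: a map preserving arbitrary joins in each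
variable separately. -/
def IsBimorphism {S T U : Type*} [CompleteLattice S] [CompleteLattice T]
    [CompleteLattice U] (f : S → T → U) : Prop :=
  (∀ (A : Set S) (y : T), f (sSup A) y = ⨆ x ∈ A, f x y) ∧
  (∀ (x : S) (B : Set T), f x (sSup B) = ⨆ y ∈ B, f x y)

/-- `(P, gen)` is a presentation of the tensor product `S ⊗ T` of sup-lattices:
`gen` is the universal bimorphism. -/
structure IsTensor (S T P : Type u) [CompleteLattice S] [CompleteLattice T]
    [CompleteLattice P] (gen : S → T → P) : Prop where
  bimorph : IsBimorphism gen
  universal : ∀ (U : Type u) [CompleteLattice U] (f : S → T → U), IsBimorphism f →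
      ∃! g : sSupHom P U, ∀ x y, g (gen x y) = f x y


namespace Stmt14Aux
open OrderDual
attribute [local instance] Classical.propDecidable

universe u
variable {S : Type u} [CompleteLattice S]

lemma top_ne_bot_of_not_le {u v : S} (h : ¬ u ≤ v) : (⊤ : S) ≠ ⊥ :=
  fun e => h (le_trans (le_trans le_top e.le) bot_le)

lemma rho_apply (x y : S) : rho x y = if y = ⊥ then ⊥ else x := rfl

lemma lam_apply (x y : S) : lam x y = if y ≤ x then ⊥ else ⊤ := rfl

lemma rho_bot (x : S) : rho x ⊥ = ⊥ := if_pos rfl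

lemma rho_ne {u : S} (x : S) (h : u ≠ ⊥) : rho x u = x := if_neg h

lemma lam_of_le {u y : S} (h : u ≤ y) : lam y u = ⊥ := if_pos h

lemma lam_of_not_le {u y : S} (h : ¬ u ≤ y) : lam y u = ⊤ := if_neg h

lemma mulq_apply (f g : sSupHom S S) (x : S) : (f * g) x = f (g x) := rfl

lemma q_le_iff {f g : sSupHom S S} : f ≤ g ↔ ∀ x, f x ≤ g x := Iff.rfl

lemma qsup_eq_sSup (f g : sSupHom S S) : f ⊔ g = sSup {f, g} := by
  refine le_antisymm (sup_le (le_sSup (by simp)) (le_sSup (by simp))) (sSup_le ?_)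
  rintro h (rfl | rfl)
  · exact le_sup_left
  · exact le_sup_right

lemma qsup_apply (f g : sSupHom S S) (x : S) : (f ⊔ g) x = f x ⊔ g x := by
  rw [qsup_eq_sSup, sSupHom.sSup_apply', iSup_pair]

lemma rholam_of_le {u y : S} (x : S) (h : u ≤ y) : (rho x * lam y) u = ⊥ := by
  rw [mulq_apply, lam_of_le h, rho_bot]

lemma rholam_of_not_le {u y : S} (x : S) (h : ¬ u ≤ y) : (rho x * lam y) u = x := by
  rw [mulq_apply, lam_of_not_le h, rho_ne x (top_ne_bot_of_not_le h)]

lemma rls_bot (x y : S) : (rho y ⊔ lam x) ⊥ = ⊥ := by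
  rw [qsup_apply, rho_bot, lam_of_le bot_le, bot_sup_eq]

lemma rls_mid {u x : S} (y : S) (h0 : u ≠ ⊥) (hx : u ≤ x) : (rho y ⊔ lam x) u = y := by
  rw [qsup_apply, rho_ne y h0, lam_of_le hx, sup_bot_eq]

lemma rls_top {u x : S} (y : S) (hx : ¬ u ≤ x) : (rho y ⊔ lam x) u = ⊤ := by
  rw [qsup_apply, lam_of_not_le hx, sup_top_eq]

lemma lam_anti {x x' : S} (h : x ≤ x') : lam x' ≤ lam x := by
  intro u
  show lam x' u ≤ lam x u
  by_cases hu : u ≤ x'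
  · rw [lam_of_le hu]; exact bot_le
  · rw [lam_of_not_le fun hc => hu (hc.trans h)]
    exact le_top

lemma rho_mono {y y' : S} (h : y ≤ y') : rho y ≤ rho y' := by
  intro u
  show rho y u ≤ rho y' u
  rcases eq_or_ne u ⊥ with rfl | hu
  · rw [rho_bot]; exact bot_le
  · rw [rho_ne _ hu, rho_ne _ hu]; exact h

lemma adj_spec (α : sSupHom S S) (y : S) : α (adj α y) ≤ y := by
  rw [adj, map_sSup]
  apply sSup_le
  rintro _ ⟨z, hz, rfl⟩
  exact hz

lemma le_adj_iff {α : sSupHom S S} {x y : S} : x ≤ adj α y ↔ α x ≤ y :=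
  ⟨fun h => le_trans (OrderHomClass.mono α h) (adj_spec α y), fun h => le_sSup h⟩

lemma adj_mono (α : sSupHom S S) {y y' : S} (h : y ≤ y') : adj α y ≤ adj α y' :=
  sSup_le_sSup fun z hz => le_trans hz h

lemma adj_comp (a b : sSupHom S S) (y : S) : adj (a * b) y = adj b (adj a y) := by
  apply le_antisymm
  · exact le_adj_iff.mpr (le_adj_iff.mpr (adj_spec (a * b) y))
  · exact le_adj_iff.mpr
      (le_trans (OrderHomClass.mono a (adj_spec b (adj a y))) (adj_spec a y))

lemma adj_sSup (s : Set (sSupHom S S)) (y : S) :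
    adj (sSup s) y = ⨅ a ∈ s, adj a y := by
  apply le_antisymm
  · refine le_iInf₂ fun a ha => sSup_le_sSup fun z hz => ?_
    calc a z ≤ sSup s z := q_le_iff.mp (le_sSup ha) z
    _ ≤ y := hz
  · refine le_adj_iff.mpr ?_
    rw [sSupHom.sSup_apply']
    exact iSup₂_le fun a ha =>
      le_trans (OrderHomClass.mono a (iInf₂_le a ha)) (adj_spec a y)

lemma adj_sInf (α : sSupHom S S) (B : Set S) :
    adj α (sInf B) = ⨅ y ∈ B, adj α y := by
  apply le_antisymm
  · exact le_iInf₂ fun y hy => adj_mono α (sInf_le hy)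
  · exact le_adj_iff.mpr (le_sInf fun y hy =>
      le_trans (OrderHomClass.mono α (iInf₂_le y hy)) (adj_spec α y))

lemma adjRholam (x y v : S) :
    adj (rho x * lam y) v = if x ≤ v then ⊤ else y := by
  rw [adj]
  split
  · next h =>
    rw [← sSup_univ]
    congr 1
    refine Set.ext fun z => ⟨fun _ => trivial, fun _ => ?_⟩
    by_cases hz : z ≤ y
    · rw [Set.mem_setOf_eq, rholam_of_le x hz]; exact bot_le
    · rw [Set.mem_setOf_eq, rholam_of_not_le x hz]; exact h
  · next h =>
    have : {z : S | (rho x * lam y) z ≤ v} = Set.Iic y := by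
      refine Set.ext fun z => ⟨fun hz => ?_, fun hz => ?_⟩
      · by_contra hzc
        rw [Set.mem_setOf_eq, rholam_of_not_le x hzc] at hz
        exact h hz
      · rw [Set.mem_setOf_eq, rholam_of_le x hz]; exact bot_le
    rw [this]
    exact le_antisymm (sSup_le fun z hz => hz) (le_sSup le_rfl)

lemma alpha_le_rholam {α : sSupHom S S} {x y : S} (h : α x ≤ y) :
    α ≤ rho y ⊔ lam x := by
  intro u
  show α u ≤ (rho y ⊔ lam x) u
  rcases eq_or_ne u ⊥ with rfl | hu
  · rw [map_bot]; exact bot_le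
  · by_cases hx : u ≤ x
    · rw [rls_mid y hu hx]
      exact le_trans (OrderHomClass.mono α hx) h
    · rw [rls_top y hx]; exact le_top

lemma q_biSup_apply {ι : Type*} (A : Set ι) (f : ι → sSupHom S S) (x : S) :
    (⨆ i ∈ A, f i) x = ⨆ i ∈ A, f i x := by
  rw [show (⨆ i ∈ A, f i) = sSup (f '' A) from sSup_image.symm, sSupHom.sSup_apply',
    iSup_image]

section TensorSide
variable {P : Type u} [Quantale' P] {gen : S → Sᵒᵈ → P}

/-- left multiplication as a sSup-hom, in any quantale -/
def lmul {R : Type*} [Quantale' R] (a : R) : sSupHom R R :=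
  ⟨fun c => a * c, fun s => (Quantale'.mul_sSup a s).trans sSup_image.symm⟩

/-- right multiplication as a sSup-hom, in any quantale -/
def rmul {R : Type*} [Quantale' R] (a : R) : sSupHom R R :=
  ⟨fun c => c * a, fun s => (Quantale'.sSup_mul s a).trans sSup_image.symm⟩

lemma lmul_apply {R : Type*} [Quantale' R] (a c : R) : lmul a c = a * c := rfl
lemma rmul_apply {R : Type*} [Quantale' R] (a c : R) : rmul a c = c * a := rfl

lemma map_biSup {U V : Type*} [CompleteLattice U] [CompleteLattice V]
    (g : sSupHom U V) {ι : Type*} (A : Set ι) (f : ι → U) :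
    g (⨆ x ∈ A, f x) = ⨆ x ∈ A, g (f x) := by
  rw [map_iSup]
  exact iSup_congr fun x => map_iSup g _

lemma gen_sSup₁ (ht : IsTensor S Sᵒᵈ P gen) (A : Set S) (y : Sᵒᵈ) :
    gen (sSup A) y = ⨆ x ∈ A, gen x y := ht.bimorph.1 A y

lemma gen_sSup₂ (ht : IsTensor S Sᵒᵈ P gen) (x : S) (B : Set Sᵒᵈ) :
    gen x (sSup B) = ⨆ y ∈ B, gen x y := ht.bimorph.2 x B

lemma gen_mono₁ (ht : IsTensor S Sᵒᵈ P gen) {x₁ x₂ : S} (y : Sᵒᵈ) (h : x₁ ≤ x₂) :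
    gen x₁ y ≤ gen x₂ y := by
  have h2 := gen_sSup₁ ht {x₁, x₂} y
  rw [sSup_pair, sup_eq_right.mpr h] at h2
  rw [h2]
  exact le_iSup₂ (f := fun x _ => gen x y) x₁ (Set.mem_insert _ _)

lemma gen_mono₂ (ht : IsTensor S Sᵒᵈ P gen) (x : S) {y₁ y₂ : Sᵒᵈ} (h : y₁ ≤ y₂) :
    gen x y₁ ≤ gen x y₂ := by
  have h2 := gen_sSup₂ ht x {y₁, y₂}
  rw [sSup_pair, sup_eq_right.mpr h] at h2
  rw [h2]
  exact le_iSup₂ (f := fun y _ => gen x y) y₁ (Set.mem_insert _ _)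

lemma gen_bot₁ (ht : IsTensor S Sᵒᵈ P gen) (y : Sᵒᵈ) : gen ⊥ y = ⊥ := by
  have h2 := gen_sSup₁ ht ∅ y
  simpa using h2

lemma gen_bot₂ (ht : IsTensor S Sᵒᵈ P gen) (x : S) : gen x ⊥ = ⊥ := by
  have h2 := gen_sSup₂ ht x ∅
  simpa using h2

lemma iSup_preimage_dual {U : Type*} [CompleteLattice U] (B : Set Sᵒᵈ) (k : S → U) :
    ⨆ z ∈ toDual ⁻¹' B, k z = ⨆ y ∈ B, k (ofDual y) :=
  le_antisymm (iSup₂_le fun z hz => le_iSup₂ (f := fun y _ => k (ofDual y)) (toDual z) hz)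
    (iSup₂_le fun y hy => le_iSup₂ (f := fun z _ => k z) (ofDual y) hy)

lemma iInf_preimage_dual {U : Type*} [CompleteLattice U] (B : Set Sᵒᵈ) (k : S → U) :
    ⨅ z ∈ toDual ⁻¹' B, k z = ⨅ y ∈ B, k (ofDual y) :=
  le_antisymm (le_iInf₂ fun y hy => iInf₂_le (ofDual y) hy)
    (le_iInf₂ fun z hz => iInf₂_le (f := fun y _ => k (ofDual y)) (toDual z) hz)

lemma iSup_preimage_dual' {U : Type*} [CompleteLattice U] (B : Set S) (k : Sᵒᵈ → U) :
    ⨆ z ∈ ofDual ⁻¹' B, k z = ⨆ y ∈ B, k (toDual y) :=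
  le_antisymm (iSup₂_le fun z hz => le_iSup₂ (f := fun y _ => k (toDual y)) (ofDual z) hz)
    (iSup₂_le fun y hy => le_iSup₂ (f := fun z _ => k z) (toDual y) hy)

lemma gen_sInf₂ (ht : IsTensor S Sᵒᵈ P gen) (x : S) (B : Set S) :
    gen x (toDual (sInf B)) = ⨆ y ∈ B, gen x (toDual y) := by
  rw [toDual_sInf, gen_sSup₂ ht, iSup_preimage_dual' B (fun y => gen x y)]

noncomputable def lift (ht : IsTensor S Sᵒᵈ P gen) {U : Type u} [CompleteLattice U]
    (f : S → Sᵒᵈ → U) (hf : IsBimorphism f) : sSupHom P U :=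
  (ht.universal U f hf).exists.choose

lemma lift_gen (ht : IsTensor S Sᵒᵈ P gen) {U : Type u} [CompleteLattice U]
    (f : S → Sᵒᵈ → U) (hf : IsBimorphism f) (x : S) (y : Sᵒᵈ) :
    lift ht f hf (gen x y) = f x y :=
  (ht.universal U f hf).exists.choose_spec x y

lemma hom_ext (ht : IsTensor S Sᵒᵈ P gen) {U : Type u} [CompleteLattice U]
    {g h : sSupHom P U} (H : ∀ x y, g (gen x y) = h (gen x y)) : g = h := by
  have hb : IsBimorphism fun x y => g (gen x y) := by
    constructor
    · intro A y
      show g (gen (sSup A) y) = ⨆ x ∈ A, g (gen x y)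
      rw [ht.bimorph.1, map_biSup]
    · intro x B
      show g (gen x (sSup B)) = ⨆ y ∈ B, g (gen x y)
      rw [ht.bimorph.2, map_biSup]
  obtain ⟨w, hw, hu⟩ := ht.universal U _ hb
  rw [hu g fun x y => rfl, hu h fun x y => (H x y).symm]

/-- the set of generators below `c` -/
def gens (gen : S → Sᵒᵈ → P) (c : P) : Set P := {p | ∃ x y, gen x y = p ∧ p ≤ c}

lemma generation (ht : IsTensor S Sᵒᵈ P gen) (c : P) : sSup (gens gen c) = c := by
  have hle : ∀ c : P, sSup (gens gen c) ≤ c := fun c => sSup_le (by rintro p ⟨x, y, rfl, h⟩; exact h)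
  have hgensmono : ∀ {c₁ c₂ : P}, c₁ ≤ c₂ → gens gen c₁ ⊆ gens gen c₂ := by
    rintro c₁ c₂ h p ⟨x, y, rfl, hp⟩; exact ⟨x, y, rfl, hp.trans h⟩
  have hsup : ∀ s : Set P, (∀ c ∈ s, sSup (gens gen c) = c) → sSup (gens gen (sSup s)) = sSup s := by
    intro s hs
    refine le_antisymm (hle _) (sSup_le fun c hc => ?_)
    calc c = sSup (gens gen c) := (hs c hc).symm
    _ ≤ sSup (gens gen (sSup s)) := sSup_le_sSup (hgensmono (le_sSup hc))
  have hgen : ∀ (x : S) (y : Sᵒᵈ), sSup (gens gen (gen x y)) = gen x y :=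
    fun x y => le_antisymm (hle _) (le_sSup ⟨x, y, rfl, le_rfl⟩)
  letI : SupSet {c : P // sSup (gens gen c) = c} :=
    ⟨fun s => ⟨sSup (Subtype.val '' s), hsup _ (by rintro c ⟨⟨c', hc'⟩, hm, rfl⟩; exact hc')⟩⟩
  letI : CompleteLattice {c : P // sSup (gens gen c) = c} :=
    completeLatticeOfSup _ fun s =>
      ⟨fun c hc => show c.val ≤ sSup _ from le_sSup (Set.mem_image_of_mem _ hc),
       fun b hb => show sSup _ ≤ b.val from sSup_le (by rintro p ⟨q, hq, rfl⟩; exact hb hq)⟩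
  set ι : sSupHom {c : P // sSup (gens gen c) = c} P := ⟨Subtype.val, fun s => rfl⟩ with hι
  have hbf : IsBimorphism fun (x : S) (y : Sᵒᵈ) =>
      (⟨gen x y, hgen x y⟩ : {c : P // sSup (gens gen c) = c}) := by
    constructor
    · intro A y
      apply Subtype.ext
      show gen (sSup A) y = ι (⨆ x ∈ A, _)
      rw [ht.bimorph.1, map_biSup]
      rfl
    · intro x B
      apply Subtype.ext
      show gen x (sSup B) = ι (⨆ y ∈ B, _)
      rw [ht.bimorph.2, map_biSup]
      rfl
  obtain ⟨g, hg, -⟩ := ht.universal _ _ hbf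
  have hid : ι.comp g = sSupHom.id P := hom_ext ht fun x y => by
    show ι (g (gen x y)) = gen x y
    rw [hg x y]
    rfl
  have hc : (g c).val = c := DFunLike.congr_fun hid c
  have h3 := (g c).2
  rw [hc] at h3
  exact h3

end TensorSide

section Detector
variable {P : Type u} [Quantale' P] {gen : S → Sᵒᵈ → P}

lemma core1 (A : Set S) (y₀ : S) :
    rho y₀ ⊔ lam (sSup A) = ⨅ x ∈ A, (rho y₀ ⊔ lam x) := by
  apply le_antisymm
  · exact le_iInf₂ fun x hx => sup_le_sup_left (lam_anti (le_sSup hx)) _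
  · intro u
    show (⨅ x ∈ A, (rho y₀ ⊔ lam x)) u ≤ (rho y₀ ⊔ lam (sSup A)) u
    set β : sSupHom S S := ⨅ x ∈ A, (rho y₀ ⊔ lam x) with hβ
    rcases eq_or_ne u ⊥ with rfl | hu
    · rw [map_bot]; exact bot_le
    by_cases hA : u ≤ sSup A
    · rw [rls_mid y₀ hu hA]
      have h1 : ∀ x ∈ A, β x ≤ y₀ := by
        intro x hx
        rcases eq_or_ne x ⊥ with rfl | hx0
        · rw [map_bot]; exact bot_le
        · have h2 : β ≤ rho y₀ ⊔ lam x := iInf₂_le x hx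
          calc β x ≤ (rho y₀ ⊔ lam x) x := q_le_iff.mp h2 x
          _ = y₀ := rls_mid y₀ hx0 le_rfl
      have h2 : β (sSup A) ≤ y₀ := by
        rw [map_sSup]
        apply sSup_le
        rintro _ ⟨x, hx, rfl⟩
        exact h1 x hx
      exact le_trans (OrderHomClass.mono β hA) h2
    · rw [rls_top y₀ hA]; exact le_top

lemma core2 (B₀ : Set S) (x : S) :
    rho (sInf B₀) ⊔ lam x = ⨅ y ∈ B₀, (rho y ⊔ lam x) := by
  apply le_antisymm
  · exact le_iInf₂ fun y hy => sup_le_sup_right (rho_mono (sInf_le hy)) _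
  · intro u
    show (⨅ y ∈ B₀, (rho y ⊔ lam x)) u ≤ (rho (sInf B₀) ⊔ lam x) u
    set β : sSupHom S S := ⨅ y ∈ B₀, (rho y ⊔ lam x) with hβ
    rcases eq_or_ne u ⊥ with rfl | hu
    · rw [map_bot]; exact bot_le
    by_cases hx : u ≤ x
    · rw [rls_mid _ hu hx]
      refine le_sInf fun y hy => ?_
      calc β u ≤ (rho y ⊔ lam x) u := q_le_iff.mp (iInf₂_le y hy) u
      _ = y := rls_mid y hu hx
    · rw [rls_top _ hx]; exact le_top

lemma Gb_bimorph :
    IsBimorphism fun (x : S) (y : Sᵒᵈ) => toDual (rho (ofDual y) ⊔ lam x) := by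
  constructor
  · intro A y
    show toDual (rho (ofDual y) ⊔ lam (sSup A)) = _
    rw [core1 A (ofDual y)]
    simp only [toDual_iInf]
  · intro x B
    show toDual (rho (ofDual (sSup B)) ⊔ lam x) = _
    rw [ofDual_sSup, core2 (toDual ⁻¹' B) x, iInf_preimage_dual]
    simp only [toDual_iInf]

noncomputable def detect (ht : IsTensor S Sᵒᵈ P gen) : sSupHom P (sSupHom S S)ᵒᵈ :=
  lift ht _ Gb_bimorph

lemma detect_gen (ht : IsTensor S Sᵒᵈ P gen) (x : S) (y : Sᵒᵈ) :
    detect ht (gen x y) = toDual (rho (ofDual y) ⊔ lam x) :=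
  lift_gen ht _ Gb_bimorph x y

/-- the orthogonal of `α` -/
def DD (gen : S → Sᵒᵈ → P) (α : sSupHom S S) : P :=
  sSup {p | ∃ x y, gen x (toDual y) = p ∧ α x ≤ y}

lemma gen_le_DD (ht : IsTensor S Sᵒᵈ P gen) {α : sSupHom S S} {u v : S} :
    gen u (toDual v) ≤ DD gen α ↔ α u ≤ v := by
  constructor
  · intro hle
    have h1 : detect ht (gen u (toDual v)) ≤ detect ht (DD gen α) :=
      OrderHomClass.mono (detect ht) hle
    have h3 : α ≤ ofDual (detect ht (DD gen α)) := by
      rw [DD, map_sSup, ofDual_sSup]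
      refine le_sInf fun q hq => ?_
      obtain ⟨p, ⟨x, y, rfl, hxy⟩, hpq⟩ := hq
      rw [detect_gen ht] at hpq
      have hq' : q = rho y ⊔ lam x := toDual_inj.mp hpq.symm
      rw [hq']
      exact alpha_le_rholam hxy
    have h4 : ofDual (detect ht (DD gen α)) ≤ rho v ⊔ lam u := by
      rw [detect_gen ht u (toDual v)] at h1
      exact h1
    have h5 : α ≤ rho v ⊔ lam u := le_trans h3 h4
    rcases eq_or_ne u ⊥ with rfl | hu
    · rw [map_bot]; exact bot_le
    · calc α u ≤ (rho v ⊔ lam u) u := q_le_iff.mp h5 u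
      _ = v := rls_mid v hu le_rfl
  · intro h
    refine le_trans (gen_mono₂ ht u (toDual_le_toDual.mpr h)) (le_sSup ?_)
    exact ⟨u, α u, rfl, le_rfl⟩

/-- the dualizing element -/
def dEl (gen : S → Sᵒᵈ → P) : P := ⨆ x : S, gen x (toDual x)

lemma gen_le_d (ht : IsTensor S Sᵒᵈ P gen) {u v : S} :
    gen u (toDual v) ≤ dEl gen ↔ u ≤ v := by
  constructor
  · intro h
    have hd : dEl gen ≤ DD gen (sSupHom.id S) :=
      iSup_le fun x => le_sSup ⟨x, x, rfl, le_rfl⟩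
    exact (gen_le_DD ht).mp (h.trans hd)
  · intro h
    exact le_trans (gen_mono₁ ht (toDual v) h) (le_iSup (fun x => gen x (toDual x)) v)

/-- the relation underlying an element of the tensor -/
def rel (gen : S → Sᵒᵈ → P) (c : P) (u v : S) : Prop := gen u (toDual v) ≤ c

lemma rel_up (ht : IsTensor S Sᵒᵈ P gen) {c : P} {u v w : S} (h : v ≤ w)
    (hr : rel gen c u v) : rel gen c u w :=
  le_trans (gen_mono₂ ht u (toDual_le_toDual.mpr h)) hr

lemma rel_down₁ (ht : IsTensor S Sᵒᵈ P gen) {c : P} {u u' v : S} (h : u' ≤ u)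
    (hr : rel gen c u v) : rel gen c u' v :=
  le_trans (gen_mono₁ ht (toDual v) h) hr

lemma rel_sInf (ht : IsTensor S Sᵒᵈ P gen) {c : P} {u : S} {B : Set S}
    (h : ∀ y ∈ B, rel gen c u y) : rel gen c u (sInf B) := by
  rw [rel, gen_sInf₂ ht]
  exact iSup₂_le h

lemma rel_sSup₁ (ht : IsTensor S Sᵒᵈ P gen) {c : P} {v : S} {A : Set S}
    (h : ∀ x ∈ A, rel gen c x v) : rel gen c (sSup A) v := by
  rw [rel, gen_sSup₁ ht]
  exact iSup₂_le h

/-- the map associated to an element of the tensor -/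
noncomputable def mC (gen : S → Sᵒᵈ → P) (c : P) (u : S) : S := sInf {y | rel gen c u y}

lemma rel_mC (ht : IsTensor S Sᵒᵈ P gen) (c : P) (u : S) : rel gen c u (mC gen c u) :=
  rel_sInf ht fun _ hy => hy

lemma rel_iff (ht : IsTensor S Sᵒᵈ P gen) {c : P} {u v : S} :
    rel gen c u v ↔ mC gen c u ≤ v :=
  ⟨fun h => sInf_le h, fun h => rel_up ht h (rel_mC ht c u)⟩

/-- `mC` as a join-preserving map -/
noncomputable def mCh (ht : IsTensor S Sᵒᵈ P gen) (c : P) : sSupHom S S := by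
  refine ⟨mC gen c, fun A => le_antisymm ?_ ?_⟩
  · refine (rel_iff ht).mp (rel_sSup₁ ht fun x hx => ?_)
    exact rel_up ht (le_sSup (Set.mem_image_of_mem _ hx)) (rel_mC ht c x)
  · apply sSup_le
    rintro _ ⟨x, hx, rfl⟩
    exact (rel_iff ht).mp (rel_down₁ ht (le_sSup hx) (rel_mC ht c (sSup A)))

lemma mCh_apply (ht : IsTensor S Sᵒᵈ P gen) (c : P) (u : S) :
    mCh ht c u = mC gen c u := rfl

lemma sSup_relSet (ht : IsTensor S Sᵒᵈ P gen) (c : P) :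
    sSup {a : sSupHom S S | ∀ u v, rel gen c u v → a u ≤ v} = mCh ht c := by
  apply le_antisymm
  · refine sSup_le fun a ha => q_le_iff.mpr fun u => le_sInf fun y hy => ha u y hy
  · exact le_sSup fun u v h => (rel_iff ht).mp h

lemma sSup_leSet (ht : IsTensor S Sᵒᵈ P gen) (α : sSupHom S S) :
    sSup {c' : P | ∀ u v, rel gen c' u v → α u ≤ v} = DD gen α := by
  apply le_antisymm
  · refine sSup_le fun c' hc' => ?_
    rw [← generation ht c']
    apply sSup_le
    rintro _ ⟨x, y, rfl, hle⟩
    exact (gen_le_DD ht).mpr (hc' x (ofDual y) hle)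
  · refine le_sSup fun u v hr => (gen_le_DD ht).mp hr

lemma DD_mCh (ht : IsTensor S Sᵒᵈ P gen) (c : P) : DD gen (mCh ht c) = c := by
  apply le_antisymm
  · apply sSup_le
    rintro _ ⟨x, y, rfl, hxy⟩
    exact (rel_iff ht).mpr hxy
  · conv_lhs => rw [← generation ht c]
    apply sSup_le
    rintro _ ⟨x, y, rfl, hle⟩
    exact (gen_le_DD ht).mpr ((rel_iff ht).mp hle)

lemma mCh_DD (ht : IsTensor S Sᵒᵈ P gen) (α : sSupHom S S) : mCh ht (DD gen α) = α := by
  refine sSupHom.ext fun u => ?_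
  show sInf {y | rel gen (DD gen α) u y} = α u
  have h1 : {y | rel gen (DD gen α) u y} = Set.Ici (α u) :=
    Set.ext fun y => (gen_le_DD ht (α := α) (u := u) (v := y))
  rw [h1]
  exact le_antisymm (sInf_le le_rfl) (le_sInf fun y hy => hy)

end Detector

section Actions
variable {P : Type u} [Quantale' P] {gen : S → Sᵒᵈ → P}

/-- left action of `Q(S)` on the tensor -/
noncomputable def actH (ht : IsTensor S Sᵒᵈ P gen) (α : sSupHom S S) : sSupHom P P :=
  lift ht (fun x y => gen (α x) y) (by
    constructor
    · intro A y
      show gen (α (sSup A)) y = _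
      rw [map_sSup α, gen_sSup₁ ht, iSup_image]
    · intro x B
      exact ht.bimorph.2 (α x) B)

lemma actH_gen (ht : IsTensor S Sᵒᵈ P gen) (α : sSupHom S S) (x : S) (y : Sᵒᵈ) :
    actH ht α (gen x y) = gen (α x) y :=
  lift_gen ht _ _ x y

/-- right action of `Q(S)` on the tensor -/
noncomputable def actrH (ht : IsTensor S Sᵒᵈ P gen) (α : sSupHom S S) : sSupHom P P :=
  lift ht (fun x y => gen x (toDual (adj α (ofDual y)))) (by
    constructor
    · intro A y
      exact ht.bimorph.1 A _
    · intro x B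
      show gen x (toDual (adj α (ofDual (sSup B)))) = _
      rw [ofDual_sSup, adj_sInf α, iInf_preimage_dual,
        show (⨅ y ∈ B, adj α (ofDual y)) = sInf ((fun y => adj α (ofDual y)) '' B) from
          sInf_image.symm,
        gen_sInf₂ ht, iSup_image])

lemma actrH_gen (ht : IsTensor S Sᵒᵈ P gen) (α : sSupHom S S) (x : S) (y : Sᵒᵈ) :
    actrH ht α (gen x y) = gen x (toDual (adj α (ofDual y))) :=
  lift_gen ht _ _ x y

/-- the coupling -/
noncomputable def phiH (ht : IsTensor S Sᵒᵈ P gen) : sSupHom P (sSupHom S S) :=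
  lift ht (fun x y => rho x * lam (ofDual y)) (by
    constructor
    · intro A y
      show rho (sSup A) * lam (ofDual y) = _
      apply le_antisymm
      · intro u
        show (rho (sSup A) * lam (ofDual y)) u ≤ _
        by_cases hy : u ≤ ofDual y
        · rw [rholam_of_le _ hy]; exact bot_le
        · rw [rholam_of_not_le _ hy]
          refine sSup_le fun x hx => ?_
          calc x = (rho x * lam (ofDual y)) u := (rholam_of_not_le x hy).symm
          _ ≤ (⨆ x ∈ A, rho x * lam (ofDual y)) u :=
            q_le_iff.mp (le_iSup₂ (f := fun x _ => rho x * lam (ofDual y)) x hx) u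
      · refine iSup₂_le fun x hx => q_le_iff.mpr fun u => ?_
        by_cases hy : u ≤ ofDual y
        · rw [rholam_of_le _ hy]; exact bot_le
        · rw [rholam_of_not_le _ hy, rholam_of_not_le _ hy]
          exact le_sSup hx
    · intro x B
      show rho x * lam (ofDual (sSup B)) = _
      rw [ofDual_sSup]
      apply le_antisymm
      · intro u
        show (rho x * lam (sInf (toDual ⁻¹' B))) u ≤ _
        by_cases hy : u ≤ sInf (toDual ⁻¹' B)
        · rw [rholam_of_le _ hy]; exact bot_le
        · rw [rholam_of_not_le _ hy]
          have h1 : ∃ y ∈ toDual ⁻¹' B, ¬ u ≤ y := by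
            by_contra hc
            push_neg at hc
            exact hy (le_sInf hc)
          obtain ⟨y, hy1, hy2⟩ := h1
          calc x = (rho x * lam y) u := (rholam_of_not_le x hy2).symm
          _ ≤ (⨆ y' ∈ B, rho x * lam (ofDual y')) u :=
            q_le_iff.mp (le_iSup₂ (f := fun y' (_ : y' ∈ B) => rho x * lam (ofDual y'))
              (toDual y) hy1) u
      · refine iSup₂_le fun y hy => q_le_iff.mpr fun u => ?_
        by_cases hu : u ≤ ofDual y
        · rw [rholam_of_le _ hu]; exact bot_le
        · rw [rholam_of_not_le _ hu,
            rholam_of_not_le _ (fun hc => hu (hc.trans (sInf_le (by exact hy))))]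
    )

lemma phiH_gen (ht : IsTensor S Sᵒᵈ P gen) (x : S) (y : Sᵒᵈ) :
    phiH ht (gen x y) = rho x * lam (ofDual y) :=
  lift_gen ht _ _ x y

lemma act_le_d (ht : IsTensor S Sᵒᵈ P gen) (α : sSupHom S S) (c : P) :
    actH ht α c ≤ dEl gen ↔ ∀ u v, rel gen c u v → α u ≤ v := by
  constructor
  · intro h u v hr
    have h1 : actH ht α (gen u (toDual v)) ≤ actH ht α c :=
      OrderHomClass.mono (actH ht α) hr
    rw [actH_gen ht] at h1
    exact (gen_le_d ht).mp (h1.trans h)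
  · intro h
    conv_lhs => rw [← generation ht c]
    rw [map_sSup]
    apply sSup_le
    rintro _ ⟨_, ⟨x, y, rfl, hpc⟩, rfl⟩
    rw [actH_gen ht]
    exact (gen_le_d ht).mpr (h x (ofDual y) hpc)

lemma actr_le_d (ht : IsTensor S Sᵒᵈ P gen) (α : sSupHom S S) (c : P) :
    actrH ht α c ≤ dEl gen ↔ ∀ u v, rel gen c u v → α u ≤ v := by
  constructor
  · intro h u v hr
    have h1 : actrH ht α (gen u (toDual v)) ≤ actrH ht α c :=
      OrderHomClass.mono (actrH ht α) hr
    rw [actrH_gen ht] at h1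
    have h2 := (gen_le_d ht).mp (h1.trans h)
    exact le_adj_iff.mp h2
  · intro h
    conv_lhs => rw [← generation ht c]
    rw [map_sSup]
    apply sSup_le
    rintro _ ⟨_, ⟨x, y, rfl, hpc⟩, rfl⟩
    rw [actrH_gen ht]
    exact (gen_le_d ht).mpr (le_adj_iff.mpr (h x (ofDual y) hpc))

end Actions

section Fields
variable {P : Type u} [Quantale' P] {gen : S → Sᵒᵈ → P}

/-- evaluation at a point, as a sSup-hom -/
noncomputable def evalu (u : S) : sSupHom (sSupHom S S) S :=
  ⟨fun a => a u, fun s => (sSupHom.sSup_apply' s u).trans sSup_image.symm⟩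

/-- `gen · y` as a sSup-hom -/
noncomputable def genv (ht : IsTensor S Sᵒᵈ P gen) (y : Sᵒᵈ) : sSupHom S P :=
  ⟨fun x => gen x y, fun A => (gen_sSup₁ ht A y).trans sSup_image.symm⟩

/-- `gen x ·` as a sSup-hom -/
noncomputable def genx (ht : IsTensor S Sᵒᵈ P gen) (x : S) : sSupHom Sᵒᵈ P :=
  ⟨fun y => gen x y, fun B => (gen_sSup₂ ht x B).trans sSup_image.symm⟩

/-- `adj · y₀` as a sSup-hom into the dual -/
noncomputable def adjy (y₀ : S) : sSupHom (sSupHom S S) Sᵒᵈ :=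
  ⟨fun a => toDual (adj a y₀), fun s => by
    show toDual (adj (sSup s) y₀) = _
    rw [adj_sSup]
    simp only [toDual_iInf]
    exact sSup_image.symm⟩

lemma gen_phi_mul (ht : IsTensor S Sᵒᵈ P gen)
    (hmul : ∀ x y u v : S, gen x (toDual y) * gen u (toDual v) =
      if u ≤ y then ⊥ else gen x (toDual v))
    (c₁ : P) (u : S) (v : Sᵒᵈ) :
    gen (phiH ht c₁ u) v = c₁ * gen u v := by
  have he : (genv ht v).comp ((evalu u).comp (phiH ht)) = rmul (gen u v) := by
    refine hom_ext ht fun x y => ?_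
    show gen ((phiH ht (gen x y)) u) v = gen x y * gen u v
    rw [phiH_gen ht]
    have hm := hmul x (ofDual y) u (ofDual v)
    simp only [toDual_ofDual] at hm
    by_cases h : u ≤ ofDual y
    · rw [rholam_of_le _ h, gen_bot₁ ht, hm, if_pos h]
    · rw [rholam_of_not_le _ h, hm, if_neg h]
  exact DFunLike.congr_fun he c₁

lemma couple_left' (ht : IsTensor S Sᵒᵈ P gen)
    (hmul : ∀ x y u v : S, gen x (toDual y) * gen u (toDual v) =
      if u ≤ y then ⊥ else gen x (toDual v))
    (c₁ c₂ : P) : actH ht (phiH ht c₁) c₂ = c₁ * c₂ := by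
  have he : actH ht (phiH ht c₁) = lmul c₁ := by
    refine hom_ext ht fun u v => ?_
    rw [actH_gen ht]
    exact gen_phi_mul ht hmul c₁ u v
  exact DFunLike.congr_fun he c₂

lemma gen_adjphi (ht : IsTensor S Sᵒᵈ P gen)
    (hmul : ∀ x y u v : S, gen x (toDual y) * gen u (toDual v) =
      if u ≤ y then ⊥ else gen x (toDual v))
    (c₂ : P) (x : S) (y : Sᵒᵈ) :
    gen x (toDual (adj (phiH ht c₂) (ofDual y))) = gen x y * c₂ := by
  have he : (genx ht x).comp ((adjy (ofDual y)).comp (phiH ht)) = lmul (gen x y) := by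
    refine hom_ext ht fun u v => ?_
    show gen x (toDual (adj (phiH ht (gen u v)) (ofDual y))) = gen x y * gen u v
    rw [phiH_gen ht, adjRholam]
    have hm := hmul x (ofDual y) u (ofDual v)
    simp only [toDual_ofDual] at hm
    by_cases h : u ≤ ofDual y
    · rw [if_pos h, hm, if_pos h, toDual_top, gen_bot₂ ht]
    · rw [if_neg h, hm, if_neg h, toDual_ofDual]
  exact DFunLike.congr_fun he c₂

lemma couple_right' (ht : IsTensor S Sᵒᵈ P gen)
    (hmul : ∀ x y u v : S, gen x (toDual y) * gen u (toDual v) =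
      if u ≤ y then ⊥ else gen x (toDual v))
    (c₁ c₂ : P) : actrH ht (phiH ht c₂) c₁ = c₁ * c₂ := by
  have he : actrH ht (phiH ht c₂) = rmul c₂ := by
    refine hom_ext ht fun x y => ?_
    rw [actrH_gen ht]
    exact gen_adjphi ht hmul c₂ x y
  exact DFunLike.congr_fun he c₁

lemma phi_act (ht : IsTensor S Sᵒᵈ P gen) (a : sSupHom S S) (c : P) :
    phiH ht (actH ht a c) = a * phiH ht c := by
  have he : (phiH ht).comp (actH ht a) = (lmul a).comp (phiH ht) := by
    refine hom_ext ht fun x y => ?_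
    show phiH ht (actH ht a (gen x y)) = a * phiH ht (gen x y)
    rw [actH_gen ht, phiH_gen ht, phiH_gen ht]
    refine sSupHom.ext fun u => ?_
    show (rho (a x) * lam (ofDual y)) u = a ((rho x * lam (ofDual y)) u)
    by_cases h : u ≤ ofDual y
    · rw [rholam_of_le _ h, rholam_of_le _ h, map_bot]
    · rw [rholam_of_not_le _ h, rholam_of_not_le _ h]
  exact DFunLike.congr_fun he c

lemma phi_actr (ht : IsTensor S Sᵒᵈ P gen) (a : sSupHom S S) (c : P) :
    phiH ht (actrH ht a c) = phiH ht c * a := by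
  have he : (phiH ht).comp (actrH ht a) = (rmul a).comp (phiH ht) := by
    refine hom_ext ht fun x y => ?_
    show phiH ht (actrH ht a (gen x y)) = phiH ht (gen x y) * a
    rw [actrH_gen ht, phiH_gen ht, phiH_gen ht]
    refine sSupHom.ext fun u => ?_
    show (rho x * lam (adj a (ofDual y))) u = (rho x * lam (ofDual y)) (a u)
    by_cases h : a u ≤ ofDual y
    · rw [rholam_of_le _ (le_adj_iff.mpr h), rholam_of_le _ h]
    · rw [rholam_of_not_le _ (fun hc => h (le_adj_iff.mp hc)), rholam_of_not_le _ h]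
  exact DFunLike.congr_fun he c

lemma act_sSup_hom (ht : IsTensor S Sᵒᵈ P gen) (s : Set (sSupHom S S)) :
    actH ht (sSup s) = sSup (actH ht '' s) := by
  refine hom_ext ht fun x y => ?_
  rw [actH_gen ht, sSupHom.sSup_apply' (actH ht '' s) (gen x y), iSup_image,
    show (sSup s) x = ⨆ a ∈ s, a x from sSupHom.sSup_apply' s x,
    show (⨆ a ∈ s, a x) = sSup ((fun a : sSupHom S S => a x) '' s) from sSup_image.symm,
    gen_sSup₁ ht, iSup_image]
  exact iSup_congr fun a => iSup_congr fun ha => (actH_gen ht a x y).symm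

lemma sSup_act' (ht : IsTensor S Sᵒᵈ P gen) (s : Set (sSupHom S S)) (c : P) :
    actH ht (sSup s) c = ⨆ a ∈ s, actH ht a c := by
  rw [DFunLike.congr_fun (act_sSup_hom ht s) c, sSupHom.sSup_apply', iSup_image]

lemma actr_sSup_hom (ht : IsTensor S Sᵒᵈ P gen) (s : Set (sSupHom S S)) :
    actrH ht (sSup s) = sSup (actrH ht '' s) := by
  refine hom_ext ht fun x y => ?_
  rw [actrH_gen ht, sSupHom.sSup_apply' (actrH ht '' s) (gen x y), iSup_image, adj_sSup,
    show (⨅ a ∈ s, adj a (ofDual y)) = sInf ((fun a : sSupHom S S => adj a (ofDual y)) '' s)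
      from sInf_image.symm,
    gen_sInf₂ ht, iSup_image]
  exact iSup_congr fun a => iSup_congr fun ha => (actrH_gen ht a x y).symm

lemma actr_sSup' (ht : IsTensor S Sᵒᵈ P gen) (c : P) (s : Set (sSupHom S S)) :
    actrH ht (sSup s) c = ⨆ a ∈ s, actrH ht a c := by
  rw [DFunLike.congr_fun (actr_sSup_hom ht s) c, sSupHom.sSup_apply', iSup_image]

lemma act_mul' (ht : IsTensor S Sᵒᵈ P gen) (a b : sSupHom S S) (c : P) :
    actH ht (a * b) c = actH ht a (actH ht b c) := by
  have he : actH ht (a * b) = (actH ht a).comp (actH ht b) := by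
    refine hom_ext ht fun x y => ?_
    show actH ht (a * b) (gen x y) = actH ht a (actH ht b (gen x y))
    rw [actH_gen ht, actH_gen ht, actH_gen ht]
    rfl
  exact DFunLike.congr_fun he c

lemma actr_mul' (ht : IsTensor S Sᵒᵈ P gen) (a b : sSupHom S S) (c : P) :
    actrH ht (a * b) c = actrH ht b (actrH ht a c) := by
  have he : actrH ht (a * b) = (actrH ht b).comp (actrH ht a) := by
    refine hom_ext ht fun x y => ?_
    show actrH ht (a * b) (gen x y) = actrH ht b (actrH ht a (gen x y))
    rw [actrH_gen ht, actrH_gen ht, actrH_gen ht, adj_comp]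
    rfl
  exact DFunLike.congr_fun he c

lemma act_actr' (ht : IsTensor S Sᵒᵈ P gen) (a : sSupHom S S) (c : P) (b : sSupHom S S) :
    actrH ht b (actH ht a c) = actH ht a (actrH ht b c) := by
  have he : (actrH ht b).comp (actH ht a) = (actH ht a).comp (actrH ht b) := by
    refine hom_ext ht fun x y => ?_
    show actrH ht b (actH ht a (gen x y)) = actH ht a (actrH ht b (gen x y))
    rw [actH_gen ht, actrH_gen ht, actrH_gen ht, actH_gen ht]
  exact DFunLike.congr_fun he c

end Fields

section Top
variable {P : Type u} [Quantale' P] {gen : S → Sᵒᵈ → P}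

lemma top_eq_gen (ht : IsTensor S Sᵒᵈ P gen) : (⊤ : P) = gen ⊤ (toDual ⊥) := by
  refine le_antisymm ?_ le_top
  conv_lhs => rw [← generation ht ⊤]
  apply sSup_le
  rintro _ ⟨x, y, rfl, -⟩
  exact le_trans (gen_mono₁ ht y le_top)
    (gen_mono₂ ht ⊤ (by rw [toDual_bot]; exact le_top))

lemma phi_top (ht : IsTensor S Sᵒᵈ P gen) : phiH ht (⊤ : P) = (⊤ : sSupHom S S) := by
  rw [top_eq_gen ht, phiH_gen ht]
  simp only [ofDual_toDual]
  refine le_antisymm le_top ?_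
  intro u
  show ((⊤ : sSupHom S S) : S → S) u ≤ ((rho ⊤ * lam (⊥ : S) : sSupHom S S) : S → S) u
  rcases eq_or_ne u ⊥ with rfl | hu
  · rw [map_bot]; exact bot_le
  · rw [rholam_of_not_le _ (fun hc => hu (le_bot_iff.mp hc))]
    exact le_top

end Top

end Stmt14Aux

open OrderDual Classical in
/-- The coupling `φ(x ⊗ y') = ρ_x∘λ_y`, with the bimodule actions
`α·(x ⊗ y') = α(x) ⊗ y'` and `(x ⊗ y')·α = x ⊗ α*(y)'`, makes
`C(S) → Q(S)` a strong Girard couple with cyclic dualizing element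
`d = ⋁_x (x ⊗ x')`. -/
theorem stmt14 {S : Type u} {P : Type u} [CompleteLattice S] [Quantale' P]
    (gen : S → Sᵒᵈ → P) (ht : IsTensor S Sᵒᵈ P gen)
    (hmul : ∀ x y u v : S,
      gen x (toDual y) * gen u (toDual v) =
        if u ≤ y then ⊥ else gen x (toDual v)) :
    ∃ gc : GirardCouple P (sSupHom S S),
      (∀ x y : S, gc.φ (gen x (toDual y)) = rho x * lam y) ∧
      (∀ (α : sSupHom S S) (x y : S),
        gc.act α (gen x (toDual y)) = gen (α x) (toDual y)) ∧
      (∀ (α : sSupHom S S) (x y : S),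
        gc.actr (gen x (toDual y)) α = gen x (toDual (adj α y))) ∧
      gc.d = ⨆ x : S, gen x (toDual x) ∧
      gc.φ ⊤ = ⊤ := by
  refine ⟨{ φ := ⇑(Stmt14Aux.phiH ht)
            act := fun a c => Stmt14Aux.actH ht a c
            actr := fun c a => Stmt14Aux.actrH ht a c
            act_sSup := fun a s => by
              show Stmt14Aux.actH ht a (sSup s) = ⨆ c ∈ s, Stmt14Aux.actH ht a c
              rw [map_sSup, sSup_image]
            sSup_act := fun s c => Stmt14Aux.sSup_act' ht s c
            actr_sSup := fun c s => Stmt14Aux.actr_sSup' ht c s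
            sSup_actr := fun s a => by
              show Stmt14Aux.actrH ht a (sSup s) = ⨆ c ∈ s, Stmt14Aux.actrH ht a c
              rw [map_sSup, sSup_image]
            act_mul := fun a b c => Stmt14Aux.act_mul' ht a b c
            actr_mul := fun c a b => Stmt14Aux.actr_mul' ht a b c
            act_actr := fun a c b => Stmt14Aux.act_actr' ht a c b
            φ_sSup := fun s => by rw [map_sSup, sSup_image]
            φ_act := fun a c => Stmt14Aux.phi_act ht a c
            φ_actr := fun c a => Stmt14Aux.phi_actr ht a c
            couple_left := fun c₁ c₂ => Stmt14Aux.couple_left' ht hmul c₁ c₂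
            couple_right := fun c₁ c₂ => Stmt14Aux.couple_right' ht hmul c₁ c₂
            d := Stmt14Aux.dEl gen
            cyclic := fun a c => by
              rw [Stmt14Aux.act_le_d ht a c, Stmt14Aux.actr_le_d ht a c]
            dualizing_Q₁ := fun a => ?_
            dualizing_Q₂ := fun a => ?_
            dualizing_C₁ := fun c => ?_
            dualizing_C₂ := fun c => ?_ },
    fun x y => by simpa using Stmt14Aux.phiH_gen ht x (toDual y),
    fun α x y => Stmt14Aux.actH_gen ht α x (toDual y),
    fun α x y => by simpa using Stmt14Aux.actrH_gen ht α x (toDual y),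
    rfl,
    Stmt14Aux.phi_top ht⟩
  · -- dualizing_Q₁
    have h1 : {c : P | Stmt14Aux.actrH ht a c ≤ Stmt14Aux.dEl gen} =
        {c : P | ∀ u v, Stmt14Aux.rel gen c u v → a u ≤ v} :=
      Set.ext fun c => Stmt14Aux.actr_le_d ht a c
    rw [h1, Stmt14Aux.sSup_leSet ht a]
    have h2 : {b : sSupHom S S |
        Stmt14Aux.actH ht b (Stmt14Aux.DD gen a) ≤ Stmt14Aux.dEl gen} =
        {b : sSupHom S S | ∀ u v, Stmt14Aux.rel gen (Stmt14Aux.DD gen a) u v → b u ≤ v} :=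
      Set.ext fun b => Stmt14Aux.act_le_d ht b _
    rw [h2, Stmt14Aux.sSup_relSet ht, Stmt14Aux.mCh_DD ht]
  · -- dualizing_Q₂
    have h1 : {c : P | Stmt14Aux.actH ht a c ≤ Stmt14Aux.dEl gen} =
        {c : P | ∀ u v, Stmt14Aux.rel gen c u v → a u ≤ v} :=
      Set.ext fun c => Stmt14Aux.act_le_d ht a c
    rw [h1, Stmt14Aux.sSup_leSet ht a]
    have h2 : {b : sSupHom S S |
        Stmt14Aux.actrH ht b (Stmt14Aux.DD gen a) ≤ Stmt14Aux.dEl gen} =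
        {b : sSupHom S S | ∀ u v, Stmt14Aux.rel gen (Stmt14Aux.DD gen a) u v → b u ≤ v} :=
      Set.ext fun b => Stmt14Aux.actr_le_d ht b _
    rw [h2, Stmt14Aux.sSup_relSet ht, Stmt14Aux.mCh_DD ht]
  · -- dualizing_C₁
    have h1 : {a : sSupHom S S | Stmt14Aux.actrH ht a c ≤ Stmt14Aux.dEl gen} =
        {a : sSupHom S S | ∀ u v, Stmt14Aux.rel gen c u v → a u ≤ v} :=
      Set.ext fun a => Stmt14Aux.actr_le_d ht a c
    rw [h1, Stmt14Aux.sSup_relSet ht c]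
    have h2 : {c' : P | Stmt14Aux.actH ht (Stmt14Aux.mCh ht c) c' ≤ Stmt14Aux.dEl gen} =
        {c' : P | ∀ u v, Stmt14Aux.rel gen c' u v → Stmt14Aux.mCh ht c u ≤ v} :=
      Set.ext fun c' => Stmt14Aux.act_le_d ht _ c'
    rw [h2, Stmt14Aux.sSup_leSet ht, Stmt14Aux.DD_mCh ht]
  · -- dualizing_C₂
    have h1 : {a : sSupHom S S | Stmt14Aux.actH ht a c ≤ Stmt14Aux.dEl gen} =
        {a : sSupHom S S | ∀ u v, Stmt14Aux.rel gen c u v → a u ≤ v} :=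
      Set.ext fun a => Stmt14Aux.act_le_d ht a c
    rw [h1, Stmt14Aux.sSup_relSet ht c]
    have h2 : {c' : P | Stmt14Aux.actrH ht (Stmt14Aux.mCh ht c) c' ≤ Stmt14Aux.dEl gen} =
        {c' : P | ∀ u v, Stmt14Aux.rel gen c' u v → Stmt14Aux.mCh ht c u ≤ v} :=
      Set.ext fun c' => Stmt14Aux.actr_le_d ht _ c'
    rw [h2, Stmt14Aux.sSup_leSet ht, Stmt14Aux.DD_mCh ht]
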